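/- Let H be a graph with two specified vertices v₁ and v₂ such that all v₁–v₂ paths in H have the same parity p, and suppose H contains both a stable set containing both v₁ and v₂ and a stable set containing neither, with p odd. Then (combining with the identity w(S) + c(σ(S)) = c(E)) for any nonnegative edge costs c, the minimum slack-cost over stable sets S with S ∩ {v₁,v₂} = {v₁} plus the minimum over those with S ∩ {v₁,v₂} = {v₂} is at most the minimum over those with S ∩ {v₁,v₂} = {v₁,v₂} plus the minimum over those with S ∩ {v₁,v₂} = ∅. -/

import Mathlib

open SimpleGraph

/-- A stable set: no two of its vertices are adjacent. -/
def IsStable {V : Type*} (G : SimpleGraph V) (S : Set V) : Prop :=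
  ∀ u ∈ S, ∀ v ∈ S, ¬ G.Adj u v

open scoped Classical in
/-- The slack-cost of a vertex set `S`: total cost of the edges with no endpoint in `S`. -/
noncomputable def slackCost {V : Type*} [Fintype V] (H : SimpleGraph V)
    (c : Sym2 V → ℝ) (S : Set V) : ℝ :=
  ∑ e ∈ H.edgeFinset.filter (fun e => ∀ v ∈ e, v ∉ S), c e

/-- Minimum (infimum) slack-cost of a stable set `S` with `S ∩ {v₁, v₂} = I`. -/
noncomputable def minSlackCost {V : Type*} [Fintype V] (H : SimpleGraph V)
    (c : Sym2 V → ℝ) (v₁ v₂ : V) (I : Set V) : ℝ :=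
  sInf {r : ℝ | ∃ S : Set V, IsStable H S ∧ S ∩ {v₁, v₂} = I ∧ r = slackCost H c S}

open scoped Classical

section Aux

variable {V : Type*} [Fintype V]

lemma slackCost_nonneg (H : SimpleGraph V) (c : Sym2 V → ℝ)
    (hc : ∀ e ∈ H.edgeSet, 0 ≤ c e) (S : Set V) : 0 ≤ slackCost H c S := by
  apply Finset.sum_nonneg
  intro e he
  simp only [Finset.mem_filter, mem_edgeFinset] at he
  exact hc e he.1

omit [Fintype V] in
lemma adj_of_mem_edge {H : SimpleGraph V} {e : Sym2 V} (he : e ∈ H.edgeSet) {a b : V}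
    (ha : a ∈ e) (hb : b ∈ e) (hab : a ≠ b) : H.Adj a b := by
  induction e using Sym2.ind with
  | _ x y =>
    rw [Sym2.mem_iff] at ha hb
    rw [mem_edgeSet] at he
    rcases ha with rfl | rfl <;> rcases hb with rfl | rfl <;>
      first
      | exact absurd rfl hab
      | exact he
      | exact he.symm

/-- Along a walk all of whose vertices lie in the symmetric difference of two stable
sets, the sides alternate; hence the parity of the length is determined by the sides
of the endpoints. -/
lemma walk_parity {H : SimpleGraph V} {A B : Set V} (hA : IsStable H A) (hB : IsStable H B) :
    ∀ {a b : V} (w : H.Walk a b),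
      (∀ y ∈ w.support, y ∈ (A \ B) ∪ (B \ A)) →
      (Even w.length ↔ (a ∈ A ↔ b ∈ A)) := by
  intro a b w
  induction w with
  | nil => intro _; simp
  | @cons u x y h w ih =>
    intro hsup
    have hu : u ∈ (A \ B) ∪ (B \ A) := hsup u (by simp)
    have hx : x ∈ (A \ B) ∪ (B \ A) := hsup x (by simp)
    have hrest : ∀ z ∈ w.support, z ∈ (A \ B) ∪ (B \ A) := fun z hz => hsup z (by simp [hz])
    have h1 : ¬(u ∈ A ∧ x ∈ A) := fun ⟨h1, h2⟩ => hA u h1 x h2 h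
    have h2 : ¬(u ∈ B ∧ x ∈ B) := fun ⟨h1, h2⟩ => hB u h1 x h2 h
    have hflip : u ∈ A ↔ ¬ x ∈ A := by
      simp only [Set.mem_union, Set.mem_diff] at hu hx
      tauto
    simp only [Walk.length_cons, Nat.even_add_one, ih hrest]
    tauto

omit [Fintype V] in
lemma rtg_walk {H : SimpleGraph V} {D : Set V} {a b : V}
    (h : Relation.ReflTransGen (fun x y => x ∈ D ∧ y ∈ D ∧ H.Adj x y) a b)
    (ha : a ∈ D) :
    ∃ w : H.Walk a b, ∀ y ∈ w.support, y ∈ D := by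
  induction h with
  | refl => exact ⟨Walk.nil, by simpa⟩
  | tail _ r ih =>
    obtain ⟨w, hw⟩ := ih
    refine ⟨w.concat r.2.2, ?_⟩
    intro y hy
    rw [Walk.support_concat, List.mem_append] at hy
    rcases hy with hy | hy
    · exact hw y hy
    · simp only [List.mem_singleton] at hy
      exact hy ▸ r.2.1

/-- The exchange lemma: from stable sets containing both / neither of `v₁, v₂`,
produce stable sets containing exactly one each, with at most the same total
slack-cost. -/
lemma exchange {H : SimpleGraph V} {v₁ v₂ : V}
    (hodd : ∀ p : H.Walk v₁ v₂, p.IsPath → Odd p.length)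
    (c : Sym2 V → ℝ) (hc : ∀ e ∈ H.edgeSet, 0 ≤ c e)
    {A B : Set V} (hA : IsStable H A) (hB : IsStable H B)
    (hA12 : A ∩ {v₁, v₂} = {v₁, v₂}) (hB0 : B ∩ {v₁, v₂} = ∅) :
    ∃ S₃ S₄ : Set V, IsStable H S₃ ∧ IsStable H S₄ ∧
      S₃ ∩ {v₁, v₂} = {v₁} ∧ S₄ ∩ {v₁, v₂} = {v₂} ∧
      slackCost H c S₃ + slackCost H c S₄ ≤ slackCost H c A + slackCost H c B := by
  classical
  have hv₁A : v₁ ∈ A := ((Set.ext_iff.mp hA12 v₁).mpr (by simp)).1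
  have hv₂A : v₂ ∈ A := ((Set.ext_iff.mp hA12 v₂).mpr (by simp)).1
  have hv₁B : v₁ ∉ B := fun h => ((Set.ext_iff.mp hB0 v₁).mp ⟨h, by simp⟩)
  have hv₂B : v₂ ∉ B := fun h => ((Set.ext_iff.mp hB0 v₂).mp ⟨h, by simp⟩)
  set D : Set V := (A \ B) ∪ (B \ A) with hD
  set r : V → V → Prop := fun x y => x ∈ D ∧ y ∈ D ∧ H.Adj x y with hr
  set C : Set V := {x | Relation.ReflTransGen r v₂ x} with hCdef
  have hv₂D : v₂ ∈ D := Or.inl ⟨hv₂A, hv₂B⟩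
  have hv₁D : v₁ ∈ D := Or.inl ⟨hv₁A, hv₁B⟩
  have hv₂C : v₂ ∈ C := Relation.ReflTransGen.refl
  have hCD : ∀ x ∈ C, x ∈ D := by
    intro x hx
    induction hx with
    | refl => exact hv₂D
    | tail _ hstep _ => exact hstep.2.1
  have hclose : ∀ x ∈ C, ∀ y ∈ D, H.Adj x y → y ∈ C := by
    intro x hx y hy hxy
    exact hx.tail ⟨hCD x hx, hy, hxy⟩
  -- v₁ is not in the component C of v₂
  have hv₁C : v₁ ∉ C := by
    intro h
    obtain ⟨w, hw⟩ := rtg_walk h hv₂D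
    set p := w.reverse.bypass with hp
    have hpsup : ∀ y ∈ p.support, y ∈ D := by
      intro y hy
      have := w.reverse.support_bypass_subset hy
      rw [Walk.support_reverse, List.mem_reverse] at this
      exact hw y this
    have heven : Even p.length := by
      rw [walk_parity hA hB p hpsup]
      simp [hv₁A, hv₂A]
    exact (Nat.not_even_iff_odd.mpr (hodd p w.reverse.bypass_isPath)) heven
  -- the exchanged sets
  set S₃ : Set V := (A \ C) ∪ (B ∩ C) with hS₃
  set S₄ : Set V := (B \ C) ∪ (A ∩ C) with hS₄
  have hS₃stable : IsStable H S₃ := by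
    rintro u (⟨huA, huC⟩ | ⟨huB, huC⟩) w (⟨hwA, hwC⟩ | ⟨hwB, hwC⟩) hadj
    · exact hA u huA w hwA hadj
    · by_cases huB : u ∈ B
      · exact hB u huB w hwB hadj
      · exact huC (hclose w hwC u (Or.inl ⟨huA, huB⟩) hadj.symm)
    · by_cases hwB : w ∈ B
      · exact hB u huB w hwB hadj
      · exact hwC (hclose u huC w (Or.inl ⟨hwA, hwB⟩) hadj)
    · exact hB u huB w hwB hadj
  have hS₄stable : IsStable H S₄ := by
    rintro u (⟨huB, huC⟩ | ⟨huA, huC⟩) w (⟨hwB, hwC⟩ | ⟨hwA, hwC⟩) hadj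
    · exact hB u huB w hwB hadj
    · by_cases huA : u ∈ A
      · exact hA u huA w hwA hadj
      · exact huC (hclose w hwC u (Or.inr ⟨huB, huA⟩) hadj.symm)
    · by_cases hwA : w ∈ A
      · exact hA u huA w hwA hadj
      · exact hwC (hclose u huC w (Or.inr ⟨hwB, hwA⟩) hadj)
    · exact hA u huA w hwA hadj
  have hS₃cap : S₃ ∩ {v₁, v₂} = {v₁} := by
    ext x
    simp only [Set.mem_inter_iff, Set.mem_insert_iff, Set.mem_singleton_iff]
    constructor
    · rintro ⟨hxS, rfl | rfl⟩
      · rfl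
      · rcases hxS with ⟨_, hxC⟩ | ⟨hxB, _⟩
        · exact absurd hv₂C hxC
        · exact absurd hxB hv₂B
    · rintro rfl
      exact ⟨Or.inl ⟨hv₁A, hv₁C⟩, Or.inl rfl⟩
  have hS₄cap : S₄ ∩ {v₁, v₂} = {v₂} := by
    ext x
    simp only [Set.mem_inter_iff, Set.mem_insert_iff, Set.mem_singleton_iff]
    constructor
    · rintro ⟨hxS, rfl | rfl⟩
      · rcases hxS with ⟨hxB, _⟩ | ⟨_, hxC⟩
        · exact absurd hxB hv₁B
        · exact absurd hxC hv₁C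
      · rfl
    · rintro rfl
      exact ⟨Or.inr ⟨hv₂A, hv₂C⟩, Or.inr rfl⟩
  -- slack sets
  set σ : Set V → Finset (Sym2 V) :=
    fun S => H.edgeFinset.filter (fun e => ∀ v ∈ e, v ∉ S) with hσ
  have hmemσ : ∀ S e, e ∈ σ S ↔ e ∈ H.edgeFinset ∧ ∀ v ∈ e, v ∉ S := by
    intro S e; simp [hσ]
  have hsub : σ S₃ ∪ σ S₄ ⊆ σ A ∪ σ B := by
    intro e he
    rw [Finset.mem_union] at he ⊢
    by_contra hcon
    push_neg at hcon
    obtain ⟨hcA, hcB⟩ := hcon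
    -- e meets both A and B
    have hE : e ∈ H.edgeFinset := by
      rcases he with he | he <;> exact ((hmemσ _ e).mp he).1
    have hmeetA : ∃ a ∈ e, a ∈ A := by
      by_contra h; push_neg at h
      exact hcA ((hmemσ A e).mpr ⟨hE, h⟩)
    have hmeetB : ∃ b ∈ e, b ∈ B := by
      by_contra h; push_neg at h
      exact hcB ((hmemσ B e).mpr ⟨hE, h⟩)
    obtain ⟨a, hae, haA⟩ := hmeetA
    obtain ⟨b, hbe, hbB⟩ := hmeetB
    have heS : e ∈ H.edgeSet := mem_edgeFinset.mp hE
    rcases he with he | he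
    · -- e is disjoint from S₃
      have hdis := ((hmemσ S₃ e).mp he).2
      have haC : a ∈ C := by
        by_contra haC
        exact hdis a hae (Or.inl ⟨haA, haC⟩)
      have haB : a ∉ B := fun haB => hdis a hae (Or.inr ⟨haB, haC⟩)
      have hbC : b ∉ C := fun hbC => hdis b hbe (Or.inr ⟨hbB, hbC⟩)
      have hbA : b ∉ A := fun hbA => hdis b hbe (Or.inl ⟨hbA, hbC⟩)
      have hab : a ≠ b := fun h => haB (h ▸ hbB)
      exact hbC (hclose a haC b (Or.inr ⟨hbB, hbA⟩) (adj_of_mem_edge heS hae hbe hab))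
    · -- e is disjoint from S₄
      have hdis := ((hmemσ S₄ e).mp he).2
      have haC : a ∉ C := fun haC => hdis a hae (Or.inr ⟨haA, haC⟩)
      have haB : a ∉ B := fun haB => hdis a hae (Or.inl ⟨haB, haC⟩)
      have hbC : b ∈ C := by
        by_contra hbC
        exact hdis b hbe (Or.inl ⟨hbB, hbC⟩)
      have hbA : b ∉ A := fun hbA => hdis b hbe (Or.inr ⟨hbA, hbC⟩)
      have hab : a ≠ b := fun h => haB (h ▸ hbB)
      exact haC (hclose b hbC a (Or.inl ⟨haA, haB⟩)
        (adj_of_mem_edge heS hbe hae hab.symm))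
  have hcap : σ S₃ ∩ σ S₄ ⊆ σ A ∩ σ B := by
    intro e he
    rw [Finset.mem_inter] at he ⊢
    obtain ⟨he3, he4⟩ := he
    have hE : e ∈ H.edgeFinset := ((hmemσ _ e).mp he3).1
    have hd3 := ((hmemσ S₃ e).mp he3).2
    have hd4 := ((hmemσ S₄ e).mp he4).2
    constructor
    · refine (hmemσ A e).mpr ⟨hE, fun v hv hvA => ?_⟩
      by_cases hvC : v ∈ C
      · exact hd4 v hv (Or.inr ⟨hvA, hvC⟩)
      · exact hd3 v hv (Or.inl ⟨hvA, hvC⟩)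
    · refine (hmemσ B e).mpr ⟨hE, fun v hv hvB => ?_⟩
      by_cases hvC : v ∈ C
      · exact hd3 v hv (Or.inr ⟨hvB, hvC⟩)
      · exact hd4 v hv (Or.inl ⟨hvB, hvC⟩)
  -- the cost inequality
  have hnonneg : ∀ s : Finset (Sym2 V), s ⊆ H.edgeFinset → ∀ e ∈ s, 0 ≤ c e :=
    fun s hs e he => hc e (mem_edgeFinset.mp (hs he))
  have hfsub : ∀ S : Set V, σ S ⊆ H.edgeFinset := fun S => Finset.filter_subset _ _
  have key : ∑ e ∈ σ S₃, c e + ∑ e ∈ σ S₄, c e ≤ ∑ e ∈ σ A, c e + ∑ e ∈ σ B, c e := by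
    rw [← Finset.sum_union_inter, ← Finset.sum_union_inter (s₁ := σ A) (s₂ := σ B)]
    have h1 : ∑ e ∈ σ S₃ ∪ σ S₄, c e ≤ ∑ e ∈ σ A ∪ σ B, c e := by
      apply Finset.sum_le_sum_of_subset_of_nonneg hsub
      intro e he _
      exact hc e (mem_edgeFinset.mp ((Finset.union_subset (hfsub A) (hfsub B)) he))
    have h2 : ∑ e ∈ σ S₃ ∩ σ S₄, c e ≤ ∑ e ∈ σ A ∩ σ B, c e := by
      apply Finset.sum_le_sum_of_subset_of_nonneg hcap
      intro e he _
      exact hc e (mem_edgeFinset.mp ((Finset.inter_subset_left.trans (hfsub A)) he))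
    linarith
  exact ⟨S₃, S₄, hS₃stable, hS₄stable, hS₃cap, hS₄cap, key⟩

end Aux

/-- if all `v₁`–`v₂` paths in `H` are odd and there exist a stable set
containing both of `v₁, v₂` and one containing neither, then for nonnegative edge costs
the minimum slack-cost of stable sets with `S ∩ {v₁,v₂} = {v₁}` plus that for `{v₂}` is
at most the minimum for `{v₁,v₂}` plus the minimum for `∅`. -/
theorem stmt19 {V : Type*} [Fintype V] (H : SimpleGraph V) (v₁ v₂ : V)
    (hodd : ∀ p : H.Walk v₁ v₂, p.IsPath → Odd p.length)
    (c : Sym2 V → ℝ) (hc : ∀ e ∈ H.edgeSet, 0 ≤ c e)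
    (h12 : ∃ S : Set V, IsStable H S ∧ S ∩ {v₁, v₂} = {v₁, v₂})
    (h0 : ∃ S : Set V, IsStable H S ∧ S ∩ {v₁, v₂} = ∅) :
    minSlackCost H c v₁ v₂ {v₁} + minSlackCost H c v₁ v₂ {v₂}
      ≤ minSlackCost H c v₁ v₂ {v₁, v₂} + minSlackCost H c v₁ v₂ ∅ := by
  classical
  obtain ⟨SA, hSA, hSA12⟩ := h12
  obtain ⟨SB, hSB, hSB0⟩ := h0
  set T : Set V → Set ℝ :=
    fun I => {r : ℝ | ∃ S : Set V, IsStable H S ∧ S ∩ {v₁, v₂} = I ∧ r = slackCost H c S}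
    with hT
  have hbdd : ∀ I, BddBelow (T I) := by
    intro I
    exact ⟨0, fun r ⟨S, _, _, hr⟩ => hr ▸ slackCost_nonneg H c hc S⟩
  have hPne : (T {v₁, v₂}).Nonempty := ⟨slackCost H c SA, SA, hSA, hSA12, rfl⟩
  have hQne : (T ∅).Nonempty := ⟨slackCost H c SB, SB, hSB, hSB0, rfl⟩
  have hmin : ∀ I, minSlackCost H c v₁ v₂ I = sInf (T I) := fun I => rfl
  set m₁ := minSlackCost H c v₁ v₂ {v₁} with hm₁
  set m₂ := minSlackCost H c v₁ v₂ {v₂} with hm₂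
  have key : ∀ a ∈ T {v₁, v₂}, ∀ b ∈ T ∅, m₁ + m₂ ≤ a + b := by
    rintro a ⟨A, hAst, hA12, rfl⟩ b ⟨B, hBst, hB0, rfl⟩
    obtain ⟨S₃, S₄, h3st, h4st, h3cap, h4cap, hle⟩ :=
      exchange hodd c hc hAst hBst hA12 hB0
    have hm₁le : m₁ ≤ slackCost H c S₃ := by
      rw [hm₁, hmin]
      exact csInf_le (hbdd _) ⟨S₃, h3st, h3cap, rfl⟩
    have hm₂le : m₂ ≤ slackCost H c S₄ := by
      rw [hm₂, hmin]
      exact csInf_le (hbdd _) ⟨S₄, h4st, h4cap, rfl⟩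
    linarith
  have h1 : ∀ b ∈ T ∅, m₁ + m₂ - b ≤ sInf (T {v₁, v₂}) := by
    intro b hb
    apply le_csInf hPne
    intro a ha
    linarith [key a ha b hb]
  have h2 : m₁ + m₂ - sInf (T {v₁, v₂}) ≤ sInf (T ∅) := by
    apply le_csInf hQne
    intro b hb
    linarith [h1 b hb]
  rw [hmin {v₁, v₂}, hmin ∅]
  linarith
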